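/- arXiv:1606.00176 — 2 statements merged into one kernel-verified Lean document; each statement's English description precedes it below -/
import Mathlib

section
/- Let $a > 0$, $\lambda > 0$ and set $t_0 = (2\lambda)^{-1} + e(e-1)^{-1}\lambda^{-1}$. Let $G(t,x,y) = \frac{e^{\lambda t}}{\sqrt{4\pi a t}} \big[ e^{-(x-y)^2/(4at)} - e^{-(x+y)^2/(4at)} \big]$. Then for all $t \ge t_0$, $x \ge \sqrt{8at}$ and $y > 0$, one has $\partial_t G(t,x,y) > 0$. -/
lemma phi_lt {p q : ℝ} (hp : 1 ≤ p) (hpq : p < q) :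
    q * Real.exp (-q) < p * Real.exp (-p) := by
  have h := Real.add_one_lt_exp (x := q - p) (by linarith)
  have hq : q < p * Real.exp (q - p) := by nlinarith [Real.exp_pos (q - p)]
  calc q * Real.exp (-q) < p * Real.exp (q - p) * Real.exp (-q) := by
        have := Real.exp_pos (-q); nlinarith
    _ = p * Real.exp (-p) := by
        rw [mul_assoc, ← Real.exp_add]; ring_nf

lemma key {c al be : ℝ} (hc : Real.exp 1 / (Real.exp 1 - 1) ≤ c) (hal : 0 ≤ al)
    (h2 : 2 ≤ be) (hab : al < be) :
    0 < c * (Real.exp (-al) - Real.exp (-be)) + al * Real.exp (-al) - be * Real.exp (-be) := by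
  have h2e : (2:ℝ) < Real.exp 1 := by
    have := Real.add_one_lt_exp (x := (1:ℝ)) one_ne_zero; linarith
  have hc0 : 0 < c := lt_of_lt_of_le (div_pos (Real.exp_pos 1) (by linarith)) hc
  by_cases h : 1 ≤ al
  · have h1 := phi_lt h hab
    have h2' : Real.exp (-be) < Real.exp (-al) := Real.exp_lt_exp.mpr (by linarith)
    nlinarith
  · push_neg at h
    set u := Real.exp (-1) with hu
    have hu0 : 0 < u := Real.exp_pos _
    have huE : Real.exp 1 = u⁻¹ := by rw [hu, Real.exp_neg, inv_inv]
    have hu2 : Real.exp (-2) = u * u := by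
      rw [hu, ← Real.exp_add]; norm_num
    have huh : u < 1/2 := by
      have : 2 < u⁻¹ := by rw [← huE]; exact h2e
      rw [lt_inv_comm₀ (by norm_num) hu0] at this; linarith
    have hPQ : u - u * u < Real.exp (-al) - Real.exp (-be) := by
      have h1 : u < Real.exp (-al) := Real.exp_lt_exp.mpr (by linarith)
      have h2' : Real.exp (-be) ≤ u * u := by
        rw [← hu2]; exact Real.exp_le_exp.mpr (by linarith)
      linarith
    have hbQ : be * Real.exp (-be) ≤ 2 * (u * u) := by
      rw [← hu2]
      rcases eq_or_lt_of_le h2 with h' | h'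
      · rw [← h']
      · exact (phi_lt one_le_two h').le
    have hc1 : 1 ≤ c * (1 - u) := by
      rw [huE] at hc
      have heq : u⁻¹ / (u⁻¹ - 1) = 1 / (1 - u) := by
        have hu1 : u⁻¹ - 1 = (1 - u) / u := by
          rw [eq_div_iff hu0.ne', sub_mul, inv_mul_cancel₀ hu0.ne', one_mul]
        rw [hu1, div_div_eq_mul_div, inv_mul_cancel₀ hu0.ne']
      rw [heq] at hc
      exact (div_le_iff₀ (by linarith)).mp hc
    have hA : u ≤ c * (u - u * u) := by nlinarith
    have h4 := mul_lt_mul_of_pos_left hPQ hc0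
    have h5 : 0 ≤ al * Real.exp (-al) := mul_nonneg hal (Real.exp_pos _).le
    nlinarith

theorem stmt7 (a lam : ℝ) (ha : 0 < a) (hlam : 0 < lam) (t0 : ℝ)
    (ht0 : t0 = (2 * lam)⁻¹ + Real.exp 1 * (Real.exp 1 - 1)⁻¹ * lam⁻¹)
    (t x y : ℝ) (ht : t0 ≤ t) (hx : Real.sqrt (8 * a * t) ≤ x) (hy : 0 < y) :
    0 < deriv
      (fun s : ℝ => Real.exp (lam * s) / Real.sqrt (4 * Real.pi * a * s) *
        (Real.exp (-(x - y) ^ 2 / (4 * a * s)) - Real.exp (-(x + y) ^ 2 / (4 * a * s)))) t := by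
  have hπ : 0 < Real.pi := Real.pi_pos
  have h2e : (2:ℝ) < Real.exp 1 := by
    have := Real.add_one_lt_exp (x := (1:ℝ)) one_ne_zero; linarith
  have hE1 : (0:ℝ) < Real.exp 1 - 1 := by linarith
  have ht0pos : 0 < t0 := by
    rw [ht0]
    have h1 : (0:ℝ) < (2 * lam)⁻¹ := by positivity
    have h2 : (0:ℝ) < Real.exp 1 * (Real.exp 1 - 1)⁻¹ * lam⁻¹ :=
      mul_pos (mul_pos (Real.exp_pos 1) (inv_pos.mpr hE1)) (inv_pos.mpr hlam)
    linarith
  have ht' : 0 < t := lt_of_lt_of_le ht0pos ht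
  have h4at : (0:ℝ) < 4 * a * t := by positivity
  have hS : 0 < Real.sqrt (4 * Real.pi * a * t) := Real.sqrt_pos.mpr (by positivity)
  -- the derivative
  have h1 : HasDerivAt (fun s : ℝ => Real.exp (lam * s)) (Real.exp (lam * t) * (lam * 1)) t :=
    ((hasDerivAt_id t).const_mul lam).exp
  have h2 : HasDerivAt (fun s : ℝ => Real.sqrt (4 * Real.pi * a * s))
      (1 / (2 * Real.sqrt (4 * Real.pi * a * t)) * (4 * Real.pi * a * 1)) t :=
    (Real.hasDerivAt_sqrt (by positivity)).comp t ((hasDerivAt_id t).const_mul (4 * Real.pi * a))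
  have h3 : HasDerivAt (fun s : ℝ => Real.exp (-(x - y) ^ 2 / (4 * a * s)))
      (Real.exp (-(x - y) ^ 2 / (4 * a * t)) *
        ((0 * (4 * a * t) - -(x - y) ^ 2 * (4 * a * 1)) / (4 * a * t) ^ 2)) t :=
    ((hasDerivAt_const t (-(x - y) ^ 2)).div ((hasDerivAt_id t).const_mul (4 * a))
      (ne_of_gt h4at)).exp
  have h4 : HasDerivAt (fun s : ℝ => Real.exp (-(x + y) ^ 2 / (4 * a * s)))
      (Real.exp (-(x + y) ^ 2 / (4 * a * t)) *
        ((0 * (4 * a * t) - -(x + y) ^ 2 * (4 * a * 1)) / (4 * a * t) ^ 2)) t :=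
    ((hasDerivAt_const t (-(x + y) ^ 2)).div ((hasDerivAt_id t).const_mul (4 * a))
      (ne_of_gt h4at)).exp
  have hfull := (h1.div h2 (ne_of_gt hS)).mul (h3.sub h4)
  rw [show deriv (fun s : ℝ => Real.exp (lam * s) / Real.sqrt (4 * Real.pi * a * s) *
      (Real.exp (-(x - y) ^ 2 / (4 * a * s)) - Real.exp (-(x + y) ^ 2 / (4 * a * s)))) t = _
      from hfull.deriv]
  simp only [Pi.sub_apply, Pi.div_apply]
  set S := Real.sqrt (4 * Real.pi * a * t) with hSdef
  set E := Real.exp (lam * t) with hEdef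
  set P := Real.exp (-(x - y) ^ 2 / (4 * a * t)) with hPdef
  set Q := Real.exp (-(x + y) ^ 2 / (4 * a * t)) with hQdef
  have hS2 : S ^ 2 = 4 * Real.pi * a * t := Real.sq_sqrt (by positivity)
  have halg : (E * (lam * 1) * S - E * (1 / (2 * S) * (4 * Real.pi * a * 1))) / S ^ 2 * (P - Q) +
      E / S * (P * ((0 * (4 * a * t) - -(x - y) ^ 2 * (4 * a * 1)) / (4 * a * t) ^ 2) -
        Q * ((0 * (4 * a * t) - -(x + y) ^ 2 * (4 * a * 1)) / (4 * a * t) ^ 2)) =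
      E / (S * t) * ((lam * t - 1 / 2) * (P - Q) +
        (x - y) ^ 2 / (4 * a * t) * P - (x + y) ^ 2 / (4 * a * t) * Q) := by
    have hS0 : S ≠ 0 := ne_of_gt hS
    have ha0 : (4 * a * t) ≠ 0 := by positivity
    field_simp
    linear_combination (4 * E * a * (P - Q) * t) * hS2
  rw [halg]
  -- positivity of the factor
  have hfac : 0 < E / (S * t) := by positivity
  -- key inequality
  have hc : Real.exp 1 / (Real.exp 1 - 1) ≤ lam * t - 1 / 2 := by
    have hlt0 : lam * t0 = 1 / 2 + Real.exp 1 * (Real.exp 1 - 1)⁻¹ := by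
      rw [ht0]; field_simp
    have h := mul_le_mul_of_nonneg_left ht hlam.le
    rw [div_eq_mul_inv]
    linarith
  have hx0 : 0 < x := lt_of_lt_of_le (Real.sqrt_pos.mpr (by positivity)) hx
  have hx2 : 8 * a * t ≤ x ^ 2 := by
    have h1 : Real.sqrt (8 * a * t) ^ 2 ≤ x ^ 2 :=
      pow_le_pow_left₀ (Real.sqrt_nonneg _) hx 2
    rwa [Real.sq_sqrt (by positivity)] at h1
  have hal : (0:ℝ) ≤ (x - y) ^ 2 / (4 * a * t) := by positivity
  have hbe : (2:ℝ) ≤ (x + y) ^ 2 / (4 * a * t) := by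
    rw [le_div_iff₀ h4at]; nlinarith
  have hab : (x - y) ^ 2 / (4 * a * t) < (x + y) ^ 2 / (4 * a * t) := by
    exact (div_lt_div_iff_of_pos_right h4at).mpr (sq_lt_sq' (by linarith) (by linarith))
  have hkey := key hc hal hbe hab
  have hP : P = Real.exp (-((x - y) ^ 2 / (4 * a * t))) := by rw [hPdef, neg_div]
  have hQ : Q = Real.exp (-((x + y) ^ 2 / (4 * a * t))) := by rw [hQdef, neg_div]
  rw [hP, hQ]
  exact mul_pos hfac hkey
end

section
/- Let $a > 0$, $\lambda > 0$, let $v_0 \in L^\infty(0,\infty)$ be nonnegative and not a.e. zero, and set $w(t,x) = \int_0^\infty G(t,x,y)\, v_0(y)\, dy$ where $G(t,x,y) = \frac{e^{\lambda t}}{\sqrt{4\pi a t}} \big[ e^{-(x-y)^2/(4at)} - e^{-(x+y)^2/(4at)} \big]$. Then with $t_0 = (2\lambda)^{-1} + e(e-1)^{-1}\lambda^{-1}$, for all $t \ge t_0$ and $x \ge \sqrt{8at}$, $\partial_t w(t,x) > 0$. -/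
open MeasureTheory Real

noncomputable def dGaux (a lam x y t : ℝ) : ℝ :=
  Real.exp (lam*t) / Real.sqrt (4*Real.pi*a*t) *
    ((lam - 1/(2*t)) * (Real.exp (-(x-y)^2/(4*a*t)) - Real.exp (-(x+y)^2/(4*a*t)))
      + ((x-y)^2/(4*a*t^2) * Real.exp (-(x-y)^2/(4*a*t))
         - (x+y)^2/(4*a*t^2) * Real.exp (-(x+y)^2/(4*a*t))))

lemma hasDerivAt_P (a lam t : ℝ) (ha : 0 < a) (ht : 0 < t) :
    HasDerivAt (fun s => Real.exp (lam*s) / Real.sqrt (4*Real.pi*a*s))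
      (Real.exp (lam*t) / Real.sqrt (4*Real.pi*a*t) * (lam - 1/(2*t))) t := by
  have hct : 0 < 4*Real.pi*a*t := by positivity
  have hS : 0 < Real.sqrt (4*Real.pi*a*t) := Real.sqrt_pos.mpr hct
  have h1 : HasDerivAt (fun s => Real.exp (lam*s)) (Real.exp (lam*t) * lam) t := by
    simpa [Function.comp_def] using (Real.hasDerivAt_exp (lam*t)).comp t ((hasDerivAt_id t).const_mul lam)
  have h2 : HasDerivAt (fun s => Real.sqrt (4*Real.pi*a*s))
      (1/(2*Real.sqrt (4*Real.pi*a*t)) * (4*Real.pi*a)) t := by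
    simpa [Function.comp_def] using (Real.hasDerivAt_sqrt (ne_of_gt hct)).comp t ((hasDerivAt_id t).const_mul (4*Real.pi*a))
  have h3 := h1.div h2 (ne_of_gt hS)
  refine HasDerivAt.congr_deriv h3 ?_
  set S := Real.sqrt (4*Real.pi*a*t) with hSdef
  have hsq : S ^ 2 = 4*Real.pi*a*t := Real.sq_sqrt hct.le
  have hSne : S ≠ 0 := ne_of_gt hS
  field_simp
  linear_combination hsq

lemma hasDerivAt_Q (a k t : ℝ) (ha : 0 < a) (ht : 0 < t) :
    HasDerivAt (fun s => Real.exp (-k/(4*a*s)))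
      (Real.exp (-k/(4*a*t)) * (k/(4*a*t^2))) t := by
  have h1 : HasDerivAt (fun s : ℝ => -k/(4*a*s)) (k/(4*a*t^2)) t := by
    have h2 : HasDerivAt (fun s : ℝ => (-k/(4*a)) * s⁻¹) ((-k/(4*a)) * (-(t^2)⁻¹)) t :=
      (hasDerivAt_inv (ne_of_gt ht)).const_mul _
    have heq : (fun s : ℝ => (-k/(4*a)) * s⁻¹) = (fun s : ℝ => -k/(4*a*s)) := by
      funext s; ring
    rw [heq] at h2
    convert h2 using 1
    ring
  simpa [Function.comp_def] using (Real.hasDerivAt_exp (-k/(4*a*t))).comp t h1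

lemma hasDerivAt_G (a lam x y t : ℝ) (ha : 0 < a) (ht : 0 < t) :
    HasDerivAt (fun s => Real.exp (lam*s) / Real.sqrt (4*Real.pi*a*s) *
      (Real.exp (-(x-y)^2/(4*a*s)) - Real.exp (-(x+y)^2/(4*a*s))))
      (dGaux a lam x y t) t := by
  have h1 := hasDerivAt_P a lam t ha ht
  have h2 := (hasDerivAt_Q a ((x-y)^2) t ha ht).sub (hasDerivAt_Q a ((x+y)^2) t ha ht)
  have h3 := h1.mul h2
  refine HasDerivAt.congr_deriv h3 ?_
  unfold dGaux
  simp only [Pi.sub_apply]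
  ring

lemma key_ineq (c t u v : ℝ) (ht : 0 < t) (hu : 0 ≤ u) (huv : u < v) (hc : 1/t < c) :
    Real.exp (-v) * (c + v/t) < Real.exp (-u) * (c + u/t) := by
  have hc0 : 0 < c := lt_trans (by positivity) hc
  have hcu : 0 < c + u/t := by positivity
  set d := v - u with hd
  have hd0 : 0 < d := by simp only [hd]; linarith
  have hexp : 1 + d < Real.exp d := by
    have := Real.add_one_lt_exp (ne_of_gt hd0); linarith
  have h1 : Real.exp (-d) * (1 + d) < 1 := by
    have := mul_lt_mul_of_pos_left hexp (Real.exp_pos (-d))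
    rw [← Real.exp_add] at this
    simpa using this
  have h2 : c + v/t ≤ (c + u/t) * (1 + d) := by
    have h3 : 0 ≤ d * (c - 1/t) := mul_nonneg hd0.le (by linarith)
    have h4 : 0 ≤ u * d / t := by positivity
    have hv : v = u + d := by simp [hd]
    have expand : (c + u/t) * (1 + d) = c + u/t + d*(c - 1/t) + u*d/t + d/t := by ring
    rw [hv, add_div, expand]
    linarith [h3, h4]
  have step : Real.exp (-d) * (c + v/t) < c + u/t := by
    calc Real.exp (-d) * (c + v/t) ≤ Real.exp (-d) * ((c + u/t) * (1 + d)) :=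
          mul_le_mul_of_nonneg_left h2 (Real.exp_pos _).le
      _ = (c + u/t) * (Real.exp (-d) * (1 + d)) := by ring
      _ < (c + u/t) * 1 := by exact mul_lt_mul_of_pos_left h1 hcu
      _ = c + u/t := mul_one _
  have hev : Real.exp (-v) = Real.exp (-u) * Real.exp (-d) := by
    rw [← Real.exp_add]; congr 1; simp [hd]; ring
  calc Real.exp (-v) * (c + v/t) = Real.exp (-u) * (Real.exp (-d) * (c + v/t)) := by
        rw [hev]; ring
    _ < Real.exp (-u) * (c + u/t) := by
        exact mul_lt_mul_of_pos_left step (Real.exp_pos _)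

lemma zexp_le (z : ℝ) (hz : 0 ≤ z) : z * Real.exp (-z) ≤ Real.exp (-z/2) := by
  have h1 : z ≤ Real.exp (z/2) := by
    have h2 : Real.exp (z/2) = Real.exp (z/4) * Real.exp (z/4) := by
      rw [← Real.exp_add]; ring_nf
    have h0 : (0:ℝ) ≤ 1 + z/4 := by linarith
    have ha1 : 1 + z/4 ≤ Real.exp (z/4) := by linarith [Real.add_one_le_exp (z/4)]
    have h3 : (1 + z/4) * (1 + z/4) ≤ Real.exp (z/4) * Real.exp (z/4) :=
      mul_le_mul ha1 ha1 h0 (Real.exp_pos _).le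
    nlinarith [h3, sq_nonneg (1 - z/4)]
  calc z * Real.exp (-z) ≤ Real.exp (z/2) * Real.exp (-z) :=
        mul_le_mul_of_nonneg_right h1 (Real.exp_pos _).le
    _ = Real.exp (-z/2) := by rw [← Real.exp_add]; ring_nf

lemma dGaux_pos (a lam x y t : ℝ) (ha : 0 < a) (ht : 0 < t) (hx : 0 < x) (hy : 0 < y)
    (hlt : 3/2 < lam * t) : 0 < dGaux a lam x y t := by
  have hP : 0 < Real.exp (lam*t) / Real.sqrt (4*Real.pi*a*t) := by positivity
  unfold dGaux
  apply mul_pos hP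
  set u := (x-y)^2/(4*a*t) with hu
  set v := (x+y)^2/(4*a*t) with hv
  have hu0 : 0 ≤ u := by positivity
  have huv : u < v := by
    rw [hu, hv]
    apply div_lt_div_of_pos_right ?_ (by positivity)
    nlinarith [mul_pos hx hy]
  have hc : 1/t < lam - 1/(2*t) := by
    rw [div_lt_iff₀ ht]
    have e : (lam - 1/(2*t))*t = lam*t - 1/2 := by field_simp
    rw [e]; linarith
  have key := key_ineq (lam - 1/(2*t)) t u v ht hu0 huv hc
  have e1 : -(x-y)^2/(4*a*t) = -u := by rw [hu, neg_div]
  have e2 : -(x+y)^2/(4*a*t) = -v := by rw [hv, neg_div]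
  have e3 : (x-y)^2/(4*a*t^2) = u/t := by rw [hu, div_div]; ring_nf
  have e4 : (x+y)^2/(4*a*t^2) = v/t := by rw [hv, div_div]; ring_nf
  rw [e1, e2, e3, e4]
  nlinarith [key]


lemma abs_E_le (lam t s A B M1 M2 cA cB : ℝ)
    (hM1 : 0 < M1) (hM2 : 0 < M2) (hA0 : 0 < A) (hB0 : 0 < B)
    (hAM : A ≤ M1) (hBM : B ≤ M2)
    (hcA : cA * A ≤ 2*M1/t) (hcB : cB * B ≤ 2*M2/t)
    (hcA0 : 0 ≤ cA * A) (hcB0 : 0 ≤ cB * B)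
    (hcoef : |lam - 1/(2*s)| ≤ lam + 1/t) :
    |(lam - 1/(2*s)) * (A - B) + (cA * A - cB * B)| ≤ (lam + 3/t) * (M1 + M2) := by
  have hABs : |A - B| ≤ M1 + M2 := abs_le.mpr ⟨by linarith, by linarith⟩
  have hX : |(lam - 1/(2*s)) * (A - B)| ≤ (lam + 1/t) * (M1 + M2) := by
    rw [abs_mul]
    apply mul_le_mul hcoef hABs (abs_nonneg _) ?_
    calc (0:ℝ) ≤ |lam - 1/(2*s)| := abs_nonneg _
      _ ≤ lam + 1/t := hcoef
  have hle := le_abs_self ((lam - 1/(2*s)) * (A - B))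
  have hge := neg_abs_le ((lam - 1/(2*s)) * (A - B))
  have expand : (lam + 3/t) * (M1 + M2) = (lam + 1/t)*(M1+M2) + 2*M1/t + 2*M2/t := by ring
  exact abs_le.mpr ⟨by linarith, by linarith⟩

set_option maxHeartbeats 1000000 in
lemma dGaux_abs_le (a lam x y s t : ℝ) (ha : 0 < a) (hlam : 0 < lam) (ht : 0 < t)
    (hs1 : t/2 < s) (hs2 : s < 3*t/2) :
    |dGaux a lam x y s| ≤
      Real.exp (lam*(3*t/2)) / Real.sqrt (4*Real.pi*a*(t/2)) * ((lam + 3/t) *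
        (Real.exp (-(x-y)^2/(12*a*t)) + Real.exp (-(x+y)^2/(12*a*t)))) := by
  have hs0 : 0 < s := lt_trans (by positivity) hs1
  set k1 := (x-y)^2 with hk1
  set k2 := (x+y)^2 with hk2
  have hk10 : 0 ≤ k1 := by positivity
  have hk20 : 0 ≤ k2 := by positivity
  set M1 := Real.exp (-k1/(12*a*t)) with hM1d
  set M2 := Real.exp (-k2/(12*a*t)) with hM2d
  set A := Real.exp (-k1/(4*a*s)) with hAd
  set B := Real.exp (-k2/(4*a*s)) with hBd
  have hM1 : 0 < M1 := Real.exp_pos _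
  have hM2 : 0 < M2 := Real.exp_pos _
  have hA0 : 0 < A := Real.exp_pos _
  have hB0 : 0 < B := Real.exp_pos _
  have hmono : ∀ k r1 r2 : ℝ, 0 ≤ k → 0 < r1 → r1 ≤ r2 →
      Real.exp (-k/r1) ≤ Real.exp (-k/r2) := by
    intro k r1 r2 hk hr1 hr12
    apply Real.exp_le_exp.mpr
    rw [neg_div, neg_div, neg_le_neg_iff]
    gcongr
  have hAM : A ≤ M1 := hmono k1 (4*a*s) (12*a*t) hk10 (by positivity) (by nlinarith)
  have hBM : B ≤ M2 := hmono k2 (4*a*s) (12*a*t) hk20 (by positivity) (by nlinarith)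
  have huA : k1/(4*a*s^2) * A ≤ 2*M1/t := by
    have hu0 : 0 ≤ k1/(4*a*s) := by positivity
    have h1 : k1/(4*a*s) * A ≤ Real.exp (-(k1/(4*a*s))/2) := by
      have := zexp_le (k1/(4*a*s)) hu0
      rwa [hAd, neg_div]
    have h2 : Real.exp (-(k1/(4*a*s))/2) ≤ M1 := by
      have he : -(k1/(4*a*s))/2 = -k1/(8*a*s) := by ring
      rw [he, hM1d]
      exact hmono k1 (8*a*s) (12*a*t) hk10 (by positivity) (by nlinarith)
    calc k1/(4*a*s^2) * A = (k1/(4*a*s) * A) / s := by ring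
      _ ≤ M1 / s := by gcongr; exact h1.trans h2
      _ ≤ 2*M1/t := by rw [div_le_div_iff₀ hs0 ht]; nlinarith
  have huB : k2/(4*a*s^2) * B ≤ 2*M2/t := by
    have hu0 : 0 ≤ k2/(4*a*s) := by positivity
    have h1 : k2/(4*a*s) * B ≤ Real.exp (-(k2/(4*a*s))/2) := by
      have := zexp_le (k2/(4*a*s)) hu0
      rwa [hBd, neg_div]
    have h2 : Real.exp (-(k2/(4*a*s))/2) ≤ M2 := by
      have he : -(k2/(4*a*s))/2 = -k2/(8*a*s) := by ring
      rw [he, hM2d]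
      exact hmono k2 (8*a*s) (12*a*t) hk20 (by positivity) (by nlinarith)
    calc k2/(4*a*s^2) * B = (k2/(4*a*s) * B) / s := by ring
      _ ≤ M2 / s := by gcongr; exact h1.trans h2
      _ ≤ 2*M2/t := by rw [div_le_div_iff₀ hs0 ht]; nlinarith
  -- coefficient bound
  have h12s : 1/(2*s) ≤ 1/t := by rw [div_le_div_iff₀ (by positivity) ht]; linarith
  have h2s0 : 0 < 1/(2*s) := by positivity
  have hcoef : |lam - 1/(2*s)| ≤ lam + 1/t :=
    abs_le.mpr ⟨by linarith, by linarith⟩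
  have hEb : |(lam - 1/(2*s)) * (A - B) + (k1/(4*a*s^2) * A - k2/(4*a*s^2) * B)|
      ≤ (lam + 3/t) * (M1 + M2) :=
    abs_E_le lam t s A B M1 M2 _ _ hM1 hM2 hA0 hB0 hAM hBM huA huB
      (by positivity) (by positivity) hcoef
  -- bound on P
  have hPle : Real.exp (lam*s) / Real.sqrt (4*Real.pi*a*s) ≤
      Real.exp (lam*(3*t/2)) / Real.sqrt (4*Real.pi*a*(t/2)) := by
    apply div_le_div₀ (Real.exp_pos _).le
    · exact Real.exp_le_exp.mpr (by nlinarith)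
    · exact Real.sqrt_pos.mpr (by positivity)
    · exact Real.sqrt_le_sqrt (by
        have hp := Real.pi_pos
        nlinarith [mul_le_mul_of_nonneg_left (show t/2 ≤ s from le_of_lt hs1)
          (le_of_lt (mul_pos hp ha))])
  have hP0 : 0 ≤ Real.exp (lam*s) / Real.sqrt (4*Real.pi*a*s) := by positivity
  have hdg : dGaux a lam x y s = Real.exp (lam*s) / Real.sqrt (4*Real.pi*a*s) *
      ((lam - 1/(2*s)) * (A - B) + (k1/(4*a*s^2) * A - k2/(4*a*s^2) * B)) := rfl
  rw [hdg, abs_mul, abs_of_nonneg hP0]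
  exact mul_le_mul hPle hEb (abs_nonneg _) (by positivity)

lemma integrable_gauss (b x : ℝ) (hb : 0 < b) :
    Integrable (fun y => Real.exp (-(x-y)^2/b)) := by
  have h : Integrable (fun y : ℝ => Real.exp (-(1/b) * y^2)) :=
    integrable_exp_neg_mul_sq (by positivity)
  have h2 := h.comp_sub_right x
  have heq : (fun y => Real.exp (-(x-y)^2/b)) = (fun y => Real.exp (-(1/b)*(y-x)^2)) := by
    funext y; congr 1; ring
  rw [heq]; exact h2





set_option maxHeartbeats 1000000 in
theorem stmt16 (a lam : ℝ) (ha : 0 < a) (hlam : 0 < lam)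
    (v0 : ℝ → ℝ) (hmeas : Measurable v0) (hbdd : ∃ C, ∀ y, |v0 y| ≤ C)
    (hnonneg : ∀ᵐ y ∂(volume.restrict (Set.Ioi (0:ℝ))), 0 ≤ v0 y)
    (hnontriv : ¬ (v0 =ᵐ[volume.restrict (Set.Ioi (0:ℝ))] 0))
    (G : ℝ → ℝ → ℝ → ℝ)
    (hG : ∀ t x y, G t x y = Real.exp (lam * t) / Real.sqrt (4 * Real.pi * a * t) *
      (Real.exp (-(x - y) ^ 2 / (4 * a * t)) - Real.exp (-(x + y) ^ 2 / (4 * a * t))))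
    (w : ℝ → ℝ → ℝ)
    (hw : ∀ t x, w t x = ∫ y in Set.Ioi (0:ℝ), G t x y * v0 y)
    (t0 : ℝ) (ht0 : t0 = (2 * lam)⁻¹ + Real.exp 1 * (Real.exp 1 - 1)⁻¹ * lam⁻¹) :
    ∀ t x, t0 ≤ t → Real.sqrt (8 * a * t) ≤ x → 0 < deriv (fun s => w s x) t := by
  intro t x htt hxt
  obtain ⟨C, hC⟩ := hbdd
  have hC0 : 0 ≤ C := le_trans (abs_nonneg _) (hC 0)
  have he2 : 2 ≤ Real.exp 1 := by
    have := Real.add_one_le_exp 1; linarith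
  have ht0pos : 0 < t0 := by
    rw [ht0]
    have h1 : 0 < (2*lam)⁻¹ := by positivity
    have h2 : 0 < Real.exp 1 * (Real.exp 1 - 1)⁻¹ * lam⁻¹ := by
      apply mul_pos (mul_pos (Real.exp_pos 1) _) (by positivity)
      rw [inv_pos]; linarith
    linarith
  have ht : 0 < t := lt_of_lt_of_le ht0pos htt
  have hlt : 3/2 < lam * t := by
    have hem : 0 < Real.exp 1 - 1 := by linarith
    have h1 : lam * t0 = 1/2 + Real.exp 1 * (Real.exp 1 - 1)⁻¹ := by
      rw [ht0]; field_simp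
    have h2 : 1 < Real.exp 1 * (Real.exp 1 - 1)⁻¹ := by
      rw [← div_eq_mul_inv, lt_div_iff₀ hem]; linarith
    have h3 : lam * t0 ≤ lam * t := mul_le_mul_of_nonneg_left htt hlam.le
    linarith
  have hx : 0 < x := lt_of_lt_of_le (Real.sqrt_pos.mpr (by positivity)) hxt
  set μ := volume.restrict (Set.Ioi (0:ℝ)) with hμ
  set F : ℝ → ℝ → ℝ := fun s y => G s x y * v0 y with hF
  set F' : ℝ → ℝ → ℝ := fun s y => dGaux a lam x y s * v0 y with hF'
  -- rewrite G as explicit formula pointwise in the function sense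
  have hGfun : ∀ s, (fun y => G s x y) = fun y =>
      Real.exp (lam*s) / Real.sqrt (4*Real.pi*a*s) *
        (Real.exp (-(x-y)^2/(4*a*s)) - Real.exp (-(x+y)^2/(4*a*s))) := by
    intro s; funext y; rw [hG]
  have hGcont : ∀ s, Continuous fun y => G s x y := by
    intro s; rw [hGfun s]; fun_prop
  have hdGcont : Continuous fun y => dGaux a lam x y t := by
    unfold dGaux; fun_prop
  -- pieces for the dominated derivative theorem
  have eps_pos : 0 < t/2 := by positivity
  have hF_meas : ∀ᶠ s in nhds t, AEStronglyMeasurable (F s) μ := by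
    apply Filter.Eventually.of_forall
    intro s
    exact (((hGcont s).measurable.mul hmeas)).aestronglyMeasurable
  have hball : ∀ s ∈ Metric.ball t (t/2), t/2 < s ∧ s < 3*t/2 := by
    intro s hs
    rw [Metric.mem_ball, Real.dist_eq, abs_lt] at hs
    constructor <;> linarith [hs.1, hs.2]
  have hF_int : Integrable (F t) μ := by
    have hg1 : Integrable (fun y => Real.exp (-(x-y)^2/(4*a*t))) :=
      integrable_gauss (4*a*t) x (by positivity)
    have hg2 : Integrable (fun y => Real.exp (-(x+y)^2/(4*a*t))) := by
      have h := integrable_gauss (4*a*t) (-x) (by positivity)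
      have heq : (fun y => Real.exp (-(x+y)^2/(4*a*t))) =
          (fun y => Real.exp (-((-x)-y)^2/(4*a*t))) := by
        funext y; congr 2; ring
      rw [heq]; exact h
    set K := Real.exp (lam*t) / Real.sqrt (4*Real.pi*a*t) with hK
    have hK0 : 0 ≤ K := by positivity
    have hgint : Integrable (fun y => (K * C) *
        (Real.exp (-(x-y)^2/(4*a*t)) + Real.exp (-(x+y)^2/(4*a*t)))) μ :=
      (((hg1.add hg2).const_mul (K*C))).restrict
    apply Integrable.mono' hgint
    · exact (((hGcont t).measurable.mul hmeas)).aestronglyMeasurable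
    · apply Filter.Eventually.of_forall
      intro y
      have hGb : |G t x y| ≤ K * (Real.exp (-(x-y)^2/(4*a*t)) + Real.exp (-(x+y)^2/(4*a*t))) := by
        rw [hG]
        rw [abs_mul, abs_of_nonneg hK0]
        apply mul_le_mul_of_nonneg_left _ hK0
        have e1 := (Real.exp_pos (-(x-y)^2/(4*a*t))).le
        have e2 := (Real.exp_pos (-(x+y)^2/(4*a*t))).le
        rw [abs_le]; constructor <;> [linarith; linarith]
      calc ‖G t x y * v0 y‖ = |G t x y| * |v0 y| := abs_mul _ _
        _ ≤ (K * (Real.exp (-(x-y)^2/(4*a*t)) + Real.exp (-(x+y)^2/(4*a*t)))) * C :=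
            mul_le_mul hGb (hC y) (abs_nonneg _) (by positivity)
        _ = (K * C) * (Real.exp (-(x-y)^2/(4*a*t)) + Real.exp (-(x+y)^2/(4*a*t))) := by ring
  have hF'_meas : AEStronglyMeasurable (F' t) μ :=
    (hdGcont.measurable.mul hmeas).aestronglyMeasurable
  -- bound
  set bound : ℝ → ℝ := fun y =>
    (Real.exp (lam*(3*t/2)) / Real.sqrt (4*Real.pi*a*(t/2)) * ((lam + 3/t) *
      (Real.exp (-(x-y)^2/(12*a*t)) + Real.exp (-(x+y)^2/(12*a*t))))) * C with hbound
  have h_bound : ∀ᵐ y ∂μ, ∀ s ∈ Metric.ball t (t/2), ‖F' s y‖ ≤ bound y := by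
    apply Filter.Eventually.of_forall
    intro y s hs
    obtain ⟨hs1, hs2⟩ := hball s hs
    calc ‖F' s y‖ = |dGaux a lam x y s| * |v0 y| := abs_mul _ _
      _ ≤ (Real.exp (lam*(3*t/2)) / Real.sqrt (4*Real.pi*a*(t/2)) * ((lam + 3/t) *
            (Real.exp (-(x-y)^2/(12*a*t)) + Real.exp (-(x+y)^2/(12*a*t))))) * C :=
          mul_le_mul (dGaux_abs_le a lam x y s t ha hlam ht hs1 hs2) (hC y)
            (abs_nonneg _) (by positivity)
  have bound_integrable : Integrable bound μ := by
    have hg1 : Integrable (fun y => Real.exp (-(x-y)^2/(12*a*t))) :=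
      integrable_gauss (12*a*t) x (by positivity)
    have hg2 : Integrable (fun y => Real.exp (-(x+y)^2/(12*a*t))) := by
      have h := integrable_gauss (12*a*t) (-x) (by positivity)
      have heq : (fun y => Real.exp (-(x+y)^2/(12*a*t))) =
          (fun y => Real.exp (-((-x)-y)^2/(12*a*t))) := by
        funext y; congr 2; ring
      rw [heq]; exact h
    have h3 : Integrable (fun y => ((Real.exp (lam*(3*t/2)) / Real.sqrt (4*Real.pi*a*(t/2))
        * (lam + 3/t)) * C) * (Real.exp (-(x-y)^2/(12*a*t)) + Real.exp (-(x+y)^2/(12*a*t)))) :=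
      (hg1.add hg2).const_mul _
    have heq2 : bound = fun y => ((Real.exp (lam*(3*t/2)) / Real.sqrt (4*Real.pi*a*(t/2))
        * (lam + 3/t)) * C) * (Real.exp (-(x-y)^2/(12*a*t)) + Real.exp (-(x+y)^2/(12*a*t))) := by
      funext y; rw [hbound]; ring
    rw [heq2]
    exact h3.restrict
  have h_diff : ∀ᵐ y ∂μ, ∀ s ∈ Metric.ball t (t/2), HasDerivAt (fun s' => F s' y) (F' s y) s := by
    apply Filter.Eventually.of_forall
    intro y s hs
    obtain ⟨hs1, hs2⟩ := hball s hs
    have hs0 : 0 < s := lt_trans (by positivity) hs1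
    have hder := (hasDerivAt_G a lam x y s ha hs0).mul_const (v0 y)
    have heq : (fun s' => F s' y) = fun s' =>
        (Real.exp (lam*s') / Real.sqrt (4*Real.pi*a*s') *
          (Real.exp (-(x-y)^2/(4*a*s')) - Real.exp (-(x+y)^2/(4*a*s')))) * v0 y := by
      funext s'; rw [hF]; simp only; rw [hG]
    rw [heq]
    exact hder
  obtain ⟨hF'_int, hderiv⟩ := hasDerivAt_integral_of_dominated_loc_of_deriv_le (Metric.ball_mem_nhds t eps_pos)
    hF_meas hF_int hF'_meas h_bound bound_integrable h_diff
  have hwfun : (fun s => w s x) = fun s => ∫ y, F s y ∂μ := by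
    funext s; rw [hw]
  rw [hwfun, hderiv.deriv]
  -- positivity of the integral
  have hpos : ∀ y ∈ Set.Ioi (0:ℝ), 0 < dGaux a lam x y t := fun y hy =>
    dGaux_pos a lam x y t ha ht hx hy hlt
  have hnn : 0 ≤ᵐ[μ] F' t := by
    filter_upwards [hnonneg, ae_restrict_mem measurableSet_Ioi] with y h1 h2
    exact mul_nonneg (hpos y h2).le h1
  rw [integral_pos_iff_support_of_nonneg_ae hnn hF'_int]
  -- support has positive measure
  have hnontriv' : μ {y | v0 y ≠ 0} ≠ 0 := by
    intro h0
    apply hnontriv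
    rw [Filter.EventuallyEq, ae_iff]
    simpa using h0
  have hsub : {y | v0 y ≠ 0} ∩ Set.Ioi 0 ⊆ Function.support (F' t) ∩ Set.Ioi 0 := by
    rintro y ⟨h1, h2⟩
    refine ⟨?_, h2⟩
    simp only [Function.mem_support, hF']
    exact mul_ne_zero (ne_of_gt (hpos y h2)) h1
  calc (0:ENNReal) < μ {y | v0 y ≠ 0} := pos_iff_ne_zero.mpr hnontriv'
    _ = volume ({y | v0 y ≠ 0} ∩ Set.Ioi 0) := Measure.restrict_apply' measurableSet_Ioi
    _ ≤ volume (Function.support (F' t) ∩ Set.Ioi 0) := measure_mono hsub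
    _ = μ (Function.support (F' t)) := (Measure.restrict_apply' measurableSet_Ioi).symm
end
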